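/- Let (X,T) be a TDS such that every (T×T)-invariant Borel probability measure λ on X × X satisfies λ(Δ_X) = 1, where Δ_X is the diagonal. Then (X,T) is mean asymptotic, i.e., every pair (x,y) ∈ X × X satisfies lim_{N→∞} (1/N) Σ_{k=0}^{N−1} d(T^k x, T^k y) = 0. -/

import Mathlib

open Filter Metric Set MeasureTheory

/-- Birkhoff average of the distance between the orbits of `x` and `y`. -/
noncomputable def birkhoffAvg {X : Type*} [PseudoMetricSpace X]
    (T : X → X) (x y : X) (N : ℕ) : ℝ :=
  (∑ k ∈ Finset.range N, dist (T^[k] x) (T^[k] y)) / N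

/-- A pair `(x,y)` is mean proximal if
`liminf_{N→∞} (1/N) ∑_{k<N} d(T^k x, T^k y) = 0`. -/
def MeanProximalPair {X : Type*} [PseudoMetricSpace X] (T : X → X) (x y : X) : Prop :=
  liminf (birkhoffAvg T x y) atTop = 0

open TopologicalSpace BoundedContinuousFunction NNReal ENNReal

namespace KBRiesz


variable {Y : Type*} [MetricSpace Y] [CompactSpace Y]
variable (Λ : (Y →ᵇ ℝ≥0) →ₗ[ℝ≥0] ℝ≥0)

theorem _root_.MeasureTheory.Content.apply_eq_coe_toFun {G : Type*} [TopologicalSpace G]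
    (μ : Content G) (K : Compacts G) : μ K = μ.toFun K := rfl

/-- Riesz content auxiliary function on bounded continuous functions. -/
noncomputable def rieszContentAux : Compacts Y → ℝ≥0 := fun K =>
  sInf (Λ '' { f : Y →ᵇ ℝ≥0 | ∀ x ∈ K, (1 : ℝ≥0) ≤ f x })

theorem rieszContentAux_image_nonempty (K : Compacts Y) :
    (Λ '' { f : Y →ᵇ ℝ≥0 | ∀ x ∈ K, (1 : ℝ≥0) ≤ f x }).Nonempty := by
  rw [image_nonempty]
  use (1 : Y →ᵇ ℝ≥0)
  intro x _
  simp only [BoundedContinuousFunction.coe_one, Pi.one_apply]; rfl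

theorem rieszContentAux_mono {K₁ K₂ : Compacts Y} (h : K₁ ≤ K₂) :
    rieszContentAux Λ K₁ ≤ rieszContentAux Λ K₂ :=
  csInf_le_csInf (OrderBot.bddBelow _) (rieszContentAux_image_nonempty Λ K₂)
    (image_mono (setOf_subset_setOf.mpr fun _ f_hyp x x_in_K₁ => f_hyp x (h x_in_K₁)))

theorem rieszContentAux_le {K : Compacts Y} {f : Y →ᵇ ℝ≥0} (h : ∀ x ∈ K, (1 : ℝ≥0) ≤ f x) :
    rieszContentAux Λ K ≤ Λ f :=
  csInf_le (OrderBot.bddBelow _) ⟨f, ⟨h, rfl⟩⟩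

theorem exists_lt_rieszContentAux_add_pos (K : Compacts Y) {ε : ℝ≥0} (εpos : 0 < ε) :
    ∃ f : Y →ᵇ ℝ≥0, (∀ x ∈ K, (1 : ℝ≥0) ≤ f x) ∧ Λ f < rieszContentAux Λ K + ε := by
  obtain ⟨α, ⟨⟨f, f_hyp⟩, α_hyp⟩⟩ :=
    exists_lt_of_csInf_lt (rieszContentAux_image_nonempty Λ K)
      (lt_add_of_pos_right (rieszContentAux Λ K) εpos)
  refine ⟨f, f_hyp.left, ?_⟩
  rw [f_hyp.right]
  exact α_hyp

theorem rieszContentAux_sup_le (K1 K2 : Compacts Y) :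
    rieszContentAux Λ (K1 ⊔ K2) ≤ rieszContentAux Λ K1 + rieszContentAux Λ K2 := by
  apply _root_.le_of_forall_pos_le_add
  intro ε εpos
  obtain ⟨f1, f_test_function_K1⟩ := exists_lt_rieszContentAux_add_pos Λ K1 (half_pos εpos)
  obtain ⟨f2, f_test_function_K2⟩ := exists_lt_rieszContentAux_add_pos Λ K2 (half_pos εpos)
  have f_test_function_union : ∀ x ∈ K1 ⊔ K2, (1 : ℝ≥0) ≤ (f1 + f2) x := by
    rintro x (x_in_K1 | x_in_K2)
    · exact le_add_right (f_test_function_K1.left x x_in_K1)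
    · exact le_add_left (f_test_function_K2.left x x_in_K2)
  apply (rieszContentAux_le Λ f_test_function_union).trans (le_of_lt _)
  rw [map_add]
  apply lt_of_lt_of_le (_root_.add_lt_add f_test_function_K1.right f_test_function_K2.right)
    (le_of_eq _)
  rw [add_assoc, add_comm (ε / 2), add_assoc, add_halves ε, add_assoc]

lemma lam_mono {f g : Y →ᵇ ℝ≥0} (hfg : ∀ p, f p ≤ g p) : Λ f ≤ Λ g := by
  have hc : Continuous fun p => g p - f p := (map_continuous g).sub (map_continuous f)
  set d : Y →ᵇ ℝ≥0 := mkOfCompact ⟨fun p => g p - f p, hc⟩ with hd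
  have : f + d = g := by
    ext p; simp [hd, mkOfCompact_apply, add_tsub_cancel_of_le (hfg p)]
  calc Λ f ≤ Λ f + Λ d := le_self_add
  _ = Λ (f + d) := (map_add Λ f d).symm
  _ = Λ g := by rw [this]

/-- The Riesz content as a `Content`. -/
noncomputable def rieszContent' : Content Y where
  toFun := rieszContentAux Λ
  mono' := fun _ _ h => rieszContentAux_mono Λ h
  sup_le' := fun K1 K2 => rieszContentAux_sup_le Λ K1 K2
  sup_disjoint' := by
    intro K1 K2 hdisj _ _
    refine le_antisymm (rieszContentAux_sup_le Λ K1 K2) ?_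
    refine _root_.le_of_forall_pos_le_add ?_
    intro ε εpos
    obtain ⟨f, hf1, hfΛ⟩ := exists_lt_rieszContentAux_add_pos Λ (K1 ⊔ K2) εpos
    -- Urysohn
    obtain ⟨u, hu0, hu1, hu01⟩ := exists_continuous_zero_one_of_isClosed
      K1.isCompact.isClosed K2.isCompact.isClosed hdisj
    have hcont1 : Continuous fun p => f p * Real.toNNReal (1 - u p) :=
      (map_continuous f).mul (continuous_real_toNNReal.comp
        (continuous_const.sub (map_continuous u)))
    have hcont2 : Continuous fun p => f p * Real.toNNReal (u p) :=
      (map_continuous f).mul (continuous_real_toNNReal.comp (map_continuous u))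
    set f1 : Y →ᵇ ℝ≥0 := mkOfCompact ⟨_, hcont1⟩ with hf1def
    set f2 : Y →ᵇ ℝ≥0 := mkOfCompact ⟨_, hcont2⟩ with hf2def
    have hsum : f1 + f2 = f := by
      ext p
      have h01 := hu01 p
      have : Real.toNNReal (1 - u p) + Real.toNNReal (u p) = 1 := by
        rw [← Real.toNNReal_add (by linarith [h01.2]) h01.1, sub_add_cancel, Real.toNNReal_one]
      simp only [hf1def, hf2def, BoundedContinuousFunction.coe_add, Pi.add_apply, mkOfCompact_apply, ContinuousMap.coe_mk]
      rw [← mul_add, this, mul_one]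
    have hK1 : rieszContentAux Λ K1 ≤ Λ f1 := by
      apply rieszContentAux_le
      intro p hp
      have h0 : u p = 0 := hu0 hp
      simp only [hf1def, mkOfCompact_apply, ContinuousMap.coe_mk, h0, sub_zero,
        Real.toNNReal_one, mul_one]
      exact hf1 p (Or.inl hp)
    have hK2 : rieszContentAux Λ K2 ≤ Λ f2 := by
      apply rieszContentAux_le
      intro p hp
      have : u p = 1 := hu1 hp
      simp only [hf2def, mkOfCompact_apply, ContinuousMap.coe_mk, this, Real.toNNReal_one, mul_one]
      exact hf1 p (Or.inr hp)
    calc rieszContentAux Λ K1 + rieszContentAux Λ K2 ≤ Λ f1 + Λ f2 := add_le_add hK1 hK2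
    _ = Λ (f1 + f2) := (map_add Λ f1 f2).symm
    _ = Λ f := by rw [hsum]
    _ ≤ rieszContentAux Λ (K1 ⊔ K2) + ε := hfΛ.le

variable [MeasurableSpace Y] [BorelSpace Y]

/-- The measure associated to the Riesz content. -/
noncomputable def rieszMeasure' : Measure Y := (rieszContent' Λ).measure

lemma rieszContentAux_top (hΛ1 : Λ 1 = 1) : rieszContentAux Λ ⊤ = 1 := by
  refine le_antisymm ?_ ?_
  · have := rieszContentAux_le Λ (K := ⊤) (f := 1) (fun x _ => le_of_eq rfl)
    rwa [hΛ1] at this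
  · refine le_csInf (rieszContentAux_image_nonempty Λ ⊤) ?_
    rintro b ⟨f, hf, rfl⟩
    rw [← hΛ1]
    exact lam_mono Λ (fun p => hf p trivial)

lemma rieszMeasure'_univ (hΛ1 : Λ 1 = 1) : rieszMeasure' Λ Set.univ = 1 := by
  rw [rieszMeasure', Content.measure_apply _ MeasurableSet.univ,
    (rieszContent' Λ).outerMeasure_of_isOpen Set.univ isOpen_univ]
  have h1 : (rieszContent' Λ).innerContent ⟨Set.univ, isOpen_univ⟩ ≤ (rieszContent' Λ) ⊤ := by
    rw [Content.innerContent]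
    exact iSup₂_le fun K _ => (rieszContent' Λ).mono K ⊤ (subset_univ _)
  have h2 := (rieszContent' Λ).le_innerContent ⊤ ⟨Set.univ, isOpen_univ⟩ (subset_univ _)
  have h3 : ((rieszContent' Λ) ⊤ : ℝ≥0∞) = 1 := by
    rw [Content.apply_eq_coe_toFun]
    norm_cast
    exact rieszContentAux_top Λ hΛ1
  exact le_antisymm (h3 ▸ h1) (h3 ▸ h2)

lemma isProbRieszMeasure' (hΛ1 : Λ 1 = 1) : IsProbabilityMeasure (rieszMeasure' Λ) :=
  ⟨rieszMeasure'_univ Λ hΛ1⟩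

section Invariance
variable {S : Y → Y} (hS : Continuous S)

lemma riesz_invariant (hΛ1 : Λ 1 = 1)
    (hΛS : ∀ g : Y →ᵇ ℝ≥0, Λ (g.compContinuous ⟨S, hS⟩) = Λ g) :
    ∀ B : Set Y, MeasurableSet B → rieszMeasure' Λ (S ⁻¹' B) = rieszMeasure' Λ B := by
  set C := rieszContent' Λ with hC
  have hK : ∀ K : Compacts Y, rieszContentAux Λ K ≤ rieszContentAux Λ (K.map S hS) := by
    intro K
    refine le_csInf (rieszContentAux_image_nonempty Λ (K.map S hS)) ?_
    rintro b ⟨f, hf, rfl⟩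
    have hcomp : ∀ x ∈ K, (1:ℝ≥0) ≤ (f.compContinuous ⟨S, hS⟩) x := by
      intro x hx
      exact hf (S x) (by
        show S x ∈ (Compacts.map S hS K : Set Y)
        rw [Compacts.coe_map]
        exact mem_image_of_mem S hx)
    calc rieszContentAux Λ K ≤ Λ (f.compContinuous ⟨S, hS⟩) := rieszContentAux_le Λ hcomp
    _ = Λ f := hΛS f
  have hopen : ∀ U : Set Y, IsOpen U → C.outerMeasure (S ⁻¹' U) ≤ C.outerMeasure U := by
    intro U hU
    rw [C.outerMeasure_of_isOpen _ (hU.preimage hS), Content.innerContent]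
    refine iSup₂_le fun K hK' => ?_
    have step1 : (C K : ℝ≥0∞) ≤ C (K.map S hS) := by
      rw [Content.apply_eq_coe_toFun, Content.apply_eq_coe_toFun]
      exact_mod_cast hK K
    have step2 : (C (K.map S hS) : ℝ≥0∞) ≤ C.innerContent ⟨U, hU⟩ := by
      refine C.le_innerContent _ _ ?_
      rw [Compacts.coe_map]
      exact image_subset_iff.2 hK'
    rw [C.outerMeasure_of_isOpen U hU]
    exact step1.trans step2
  have hall : ∀ A : Set Y, C.outerMeasure (S ⁻¹' A) ≤ C.outerMeasure A := by
    intro A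
    conv_rhs => rw [C.outerMeasure_eq_iInf A]
    refine le_iInf fun U => le_iInf fun hU => le_iInf fun hAU => ?_
    calc C.outerMeasure (S ⁻¹' A) ≤ C.outerMeasure (S ⁻¹' U) :=
          (C.outerMeasure).mono (preimage_mono hAU)
    _ ≤ C.outerMeasure U := hopen U hU
    _ = C.innerContent ⟨U, hU⟩ := C.outerMeasure_of_isOpen U hU
  have hle : ∀ B : Set Y, MeasurableSet B → rieszMeasure' Λ (S ⁻¹' B) ≤ rieszMeasure' Λ B := by
    intro B hB
    rw [rieszMeasure', Content.measure_apply _ (hB.preimage hS.measurable),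
      Content.measure_apply _ hB]
    exact hall B
  intro B hB
  haveI := isProbRieszMeasure' Λ hΛ1
  refine le_antisymm (hle B hB) ?_
  have hcompl := hle Bᶜ hB.compl
  rw [preimage_compl] at hcompl
  rw [measure_compl hB (measure_ne_top _ _),
    measure_compl (hB.preimage hS.measurable) (measure_ne_top _ _),
    measure_univ] at hcompl
  have h1 : rieszMeasure' Λ B ≤ 1 := prob_le_one
  have h2 : rieszMeasure' Λ (S ⁻¹' B) ≤ 1 := prob_le_one
  exact (ENNReal.sub_le_sub_iff_left h1 one_ne_top).mp hcompl

end Invariance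

lemma riesz_open_bound (hΛ1 : Λ 1 = 1) (ψ : Y →ᵇ ℝ≥0) (hψ1 : ∀ p, ψ p ≤ 1)
    (U₀ : Set Y) (hU₀ : IsOpen U₀) (hψ0 : ∀ p ∈ U₀, ψ p = 0) :
    rieszMeasure' Λ U₀ ≤ ((1 - Λ ψ : ℝ≥0) : ℝ≥0∞) := by
  rw [rieszMeasure', Content.measure_apply _ hU₀.measurableSet,
    (rieszContent' Λ).outerMeasure_of_isOpen U₀ hU₀, Content.innerContent]
  refine iSup₂_le fun K hK => ?_
  have hcont : Continuous fun p => 1 - ψ p := continuous_const.sub (map_continuous ψ)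
  set g : Y →ᵇ ℝ≥0 := mkOfCompact ⟨_, hcont⟩ with hg
  have hΛg : rieszContentAux Λ K ≤ Λ g := by
    refine rieszContentAux_le Λ ?_
    intro p hp
    simp [hg, mkOfCompact_apply, hψ0 p (hK hp)]
  have hsum : g + ψ = 1 := by
    ext p
    simp [hg, mkOfCompact_apply, tsub_add_cancel_of_le (hψ1 p)]
  have hΛsum : Λ g + Λ ψ = 1 := by rw [← map_add, hsum, hΛ1]
  have : Λ g = 1 - Λ ψ := eq_tsub_of_add_eq hΛsum
  rw [Content.apply_eq_coe_toFun]
  exact_mod_cast hΛg.trans this.le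

/-- A bounded continuous `ℝ≥0`-valued function has an upper bound. -/
lemma bcf_exists_bound {Z : Type*} [TopologicalSpace Z] (g : Z →ᵇ ℝ≥0) :
    ∃ b : ℝ≥0, ∀ p, g p ≤ b := by
  rcases isEmpty_or_nonempty Z with hZ | hZ
  · exact ⟨0, fun p => (IsEmpty.false p).elim⟩
  · obtain ⟨p₀⟩ := hZ
    obtain ⟨C, hC⟩ := g.bounded
    refine ⟨g p₀ + Real.toNNReal C, fun p => ?_⟩
    have h1 : dist (g p) (g p₀) ≤ C := hC p p₀
    have h2 : (g p : ℝ) - (g p₀ : ℝ) ≤ C := by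
      have := abs_sub_abs_le_abs_sub (g p : ℝ) (g p₀ : ℝ)
      rw [NNReal.dist_eq] at h1
      calc (g p : ℝ) - (g p₀ : ℝ) ≤ |(g p : ℝ) - (g p₀ : ℝ)| := le_abs_self _
      _ ≤ C := h1
    rw [← NNReal.coe_le_coe]
    push_cast
    have hC0 : C ≤ Real.toNNReal C := Real.le_coe_toNNReal C
    linarith


end KBRiesz

open KBRiesz

/-- If every `(T×T)`-invariant Borel probability measure on `X × X` gives full
measure to the diagonal, then `(X,T)` is mean asymptotic. -/
theorem meanAsymptotic_of_diagonal_full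
    {X : Type*} [MetricSpace X] [CompactSpace X] [MeasurableSpace X] [BorelSpace X]
    (T : X → X) (hT : Continuous T)
    (h : ∀ ν : Measure (X × X), IsProbabilityMeasure ν →
      (∀ B : Set (X × X), MeasurableSet B → ν (Prod.map T T ⁻¹' B) = ν B) →
      ν (Set.diagonal X) = 1) :
    ∀ x y : X, Tendsto (birkhoffAvg T x y) atTop (nhds 0) := by
  intro x y
  by_contra hcon
  set a := birkhoffAvg T x y with ha
  have hanonneg : ∀ n, 0 ≤ a n :=
    fun n => div_nonneg (Finset.sum_nonneg fun k _ => dist_nonneg) (Nat.cast_nonneg n)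
  rw [Metric.tendsto_atTop] at hcon
  push_neg at hcon
  obtain ⟨ε, hε, hfreq⟩ := hcon
  have hfreq' : ∃ᶠ n in atTop, ε ≤ a n := by
    rw [Filter.frequently_atTop]
    intro N
    obtain ⟨n, hnN, hn⟩ := hfreq N
    refine ⟨n, hnN, ?_⟩
    rwa [Real.dist_eq, sub_zero, abs_of_nonneg (hanonneg n)] at hn
  have hne : (atTop ⊓ Filter.principal {n | ε ≤ a n}).NeBot :=
    Filter.frequently_iff_neBot.mp hfreq'
  set U : Ultrafilter ℕ := @Ultrafilter.of _ (atTop ⊓ Filter.principal {n | ε ≤ a n}) hne with hU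
  have hUle : (U : Filter ℕ) ≤ atTop ⊓ Filter.principal {n | ε ≤ a n} := Ultrafilter.of_le _
  have hUatTop : (U : Filter ℕ) ≤ atTop := hUle.trans inf_le_left
  have hP : {n | ε ≤ a n} ∈ U := hUle (Filter.mem_inf_of_right (Filter.mem_principal_self _))
  -- dynamics on the product
  set S : X × X → X × X := Prod.map T T with hSdef
  have hS : Continuous S := hT.prodMap hT
  set e : ℕ → X × X := fun k => (T^[k] x, T^[k] y) with he
  have hek : ∀ k, e (k + 1) = S (e k) := by
    intro k
    simp [he, hSdef, Function.iterate_succ_apply']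
  -- bounds for bcf's
  choose bg hbg using (fun g : X × X →ᵇ ℝ≥0 => bcf_exists_bound g)
  -- the averaging functionals
  set A : (X × X →ᵇ ℝ≥0) → ℕ → ℝ≥0 :=
    fun g n => (∑ k ∈ Finset.range n, g (e k)) / (n : ℝ≥0) with hA
  have hAmem : ∀ (g : X × X →ᵇ ℝ≥0) (n : ℕ), A g n ∈ Set.Icc 0 (bg g) := by
    intro g n
    refine ⟨by positivity, ?_⟩
    have hsum : (∑ k ∈ Finset.range n, g (e k)) ≤ (n : ℝ≥0) * bg g := by
      calc (∑ k ∈ Finset.range n, g (e k)) ≤ (Finset.range n).card • bg g :=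
        Finset.sum_le_card_nsmul _ _ _ (fun k _ => hbg g (e k))
      _ = (n : ℝ≥0) * bg g := by rw [Finset.card_range, nsmul_eq_mul]
    rcases Nat.eq_zero_or_pos n with hn | hn
    · simp [hA, hn]
    · rw [hA]
      rw [div_le_iff₀ (by exact_mod_cast hn : (0 : ℝ≥0) < (n : ℝ≥0))]
      rw [mul_comm] at hsum
      exact hsum
  have hlim : ∀ g : X × X →ᵇ ℝ≥0, ∃ l, Tendsto (A g) (U : Filter ℕ) (nhds l) := by
    intro g
    have hmem : (Ultrafilter.map (A g) U : Filter ℝ≥0) ≤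
        Filter.principal (Set.Icc 0 (bg g)) := by
      rw [Filter.le_principal_iff]
      exact Filter.mem_map.mpr (Filter.Eventually.of_forall (fun n => hAmem g n))
    obtain ⟨l, -, hl⟩ := isCompact_Icc.ultrafilter_le_nhds (Ultrafilter.map (A g) U) hmem
    exact ⟨l, hl⟩
  choose Λ₀ hΛ₀ using hlim
  -- linearity
  have hadd : ∀ g1 g2, Λ₀ (g1 + g2) = Λ₀ g1 + Λ₀ g2 := by
    intro g1 g2
    refine tendsto_nhds_unique (hΛ₀ (g1 + g2)) ?_
    have heq : A (g1 + g2) = fun n => A g1 n + A g2 n := by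
      funext n
      simp only [hA, BoundedContinuousFunction.add_apply, Finset.sum_add_distrib, add_div]
    rw [heq]
    exact (hΛ₀ g1).add (hΛ₀ g2)
  have hsmul : ∀ (c : ℝ≥0) (g : X × X →ᵇ ℝ≥0), Λ₀ (c • g) = c * Λ₀ g := by
    intro c g
    refine tendsto_nhds_unique (hΛ₀ (c • g)) ?_
    have heq : A (c • g) = fun n => c * A g n := by
      funext n
      simp only [hA, BoundedContinuousFunction.coe_smul, Pi.smul_apply, smul_eq_mul,
        ← Finset.mul_sum, mul_div_assoc]
    rw [heq]
    exact (hΛ₀ g).const_mul c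
  set ΛL : (X × X →ᵇ ℝ≥0) →ₗ[ℝ≥0] ℝ≥0 :=
    { toFun := Λ₀, map_add' := hadd, map_smul' := hsmul } with hΛL
  have hΛLapp : ∀ g, ΛL g = Λ₀ g := fun g => rfl
  -- normalization
  have hΛ1 : ΛL 1 = 1 := by
    rw [hΛLapp]
    refine tendsto_nhds_unique (hΛ₀ 1) ?_
    have heq : ∀ᶠ n in (U : Filter ℕ), (1 : ℝ≥0) = A 1 n := by
      refine ((Filter.eventually_ge_atTop 1).filter_mono hUatTop).mono ?_
      intro n hn
      have hne' : (n : ℝ≥0) ≠ 0 := by exact_mod_cast (Nat.one_le_iff_ne_zero.mp hn)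
      simp [hA, hne', div_self]
    exact Filter.Tendsto.congr' heq tendsto_const_nhds
  -- invariance of the functional
  have hΛS : ∀ g : X × X →ᵇ ℝ≥0, ΛL (g.compContinuous ⟨S, hS⟩) = ΛL g := by
    intro g
    rw [hΛLapp, hΛLapp]
    set gS := g.compContinuous (⟨S, hS⟩ : C(X × X, X × X)) with hgS
    have key : Tendsto (fun n => (A gS n : ℝ)) (U : Filter ℕ) (nhds ((Λ₀ g : ℝ) + 0)) := by
      have heq : ∀ n, (A gS n : ℝ)
          = (A g n : ℝ) + (((g (e n) : ℝ)) - ((g (e 0) : ℝ))) / (n : ℝ) := by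
        intro n
        have hsum : (∑ k ∈ Finset.range n, ((gS (e k) : ℝ)))
            = (∑ k ∈ Finset.range n, ((g (e k) : ℝ))) + ((g (e n) : ℝ) - (g (e 0) : ℝ)) := by
          have h1 : ∀ k, ((gS (e k) : ℝ)) = ((g (e (k + 1)) : ℝ)) := by
            intro k
            rw [hgS, BoundedContinuousFunction.compContinuous_apply]
            have hc : (⟨S, hS⟩ : C(X × X, X × X)) (e k) = S (e k) := rfl
            rw [hc, ← hek k]
          simp_rw [h1]
          have h2 := Finset.sum_range_succ' (fun k => ((g (e k) : ℝ))) n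
          have h3 := Finset.sum_range_succ (fun k => ((g (e k) : ℝ))) n
          have h4 := h2.symm.trans h3
          linarith
        have hdiv : (A gS n : ℝ) = (∑ k ∈ Finset.range n, ((gS (e k) : ℝ))) / (n : ℝ) := by
          simp only [hA]
          push_cast
          ring
        have hdiv2 : (A g n : ℝ) = (∑ k ∈ Finset.range n, ((g (e k) : ℝ))) / (n : ℝ) := by
          simp only [hA]
          push_cast
          ring
        rw [hdiv, hsum, add_div, hdiv2]
      have h0 : Tendsto (fun n : ℕ => (((g (e n) : ℝ)) - ((g (e 0) : ℝ))) / (n : ℝ))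
          (U : Filter ℕ) (nhds 0) := by
        refine Filter.Tendsto.mono_left ?_ hUatTop
        refine squeeze_zero_norm' ?_
          (tendsto_const_div_atTop_nhds_zero_nat (2 * (bg g : ℝ)))
        filter_upwards [Filter.eventually_ge_atTop 1] with n hn
        have hnpos : (0 : ℝ) < (n : ℝ) := by exact_mod_cast hn
        rw [norm_div, Real.norm_natCast]
        have hb : ∀ k, |((g (e k) : ℝ))| ≤ (bg g : ℝ) := by
          intro k
          rw [abs_of_nonneg (g (e k)).coe_nonneg]
          exact_mod_cast hbg g (e k)
        have habs : |((g (e n) : ℝ)) - ((g (e 0) : ℝ))| ≤ 2 * (bg g : ℝ) := by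
          calc |((g (e n) : ℝ)) - ((g (e 0) : ℝ))| ≤ |((g (e n) : ℝ))| + |((g (e 0) : ℝ))| :=
            abs_sub _ _
          _ ≤ 2 * (bg g : ℝ) := by linarith [hb n, hb 0]
        gcongr
        rw [Real.norm_eq_abs]
        exact habs
      have hcoe : Tendsto (fun n => (A g n : ℝ)) (U : Filter ℕ) (nhds (Λ₀ g : ℝ)) :=
        (NNReal.tendsto_coe.mpr (hΛ₀ g))
      simpa only [heq] using hcoe.add h0
    have key2 : Tendsto (fun n => (A gS n : ℝ)) (U : Filter ℕ) (nhds (Λ₀ gS : ℝ)) :=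
      NNReal.tendsto_coe.mpr (hΛ₀ gS)
    have hfin : (Λ₀ gS : ℝ) = (Λ₀ g : ℝ) + 0 := tendsto_nhds_unique key2 key
    rw [add_zero] at hfin
    exact_mod_cast hfin
  -- the invariant measure
  haveI hprob : IsProbabilityMeasure (rieszMeasure' ΛL) := isProbRieszMeasure' ΛL hΛ1
  have hinv := riesz_invariant ΛL hS hΛ1 hΛS
  have hdiag : rieszMeasure' ΛL (Set.diagonal X) = 1 := h (rieszMeasure' ΛL) hprob hinv
  -- the separating test function
  set fd : X × X → ℝ := fun p => dist p.1 p.2 with hfd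
  have hfdc : Continuous fd := Continuous.dist continuous_fst continuous_snd
  obtain ⟨M0, hM00, hM0⟩ : ∃ M0 : ℝ, 0 ≤ M0 ∧ ∀ p : X × X, fd p ≤ M0 := by
    rcases isEmpty_or_nonempty (X × X) with hZ | hZ
    · exact ⟨0, le_refl 0, fun p => (IsEmpty.false p).elim⟩
    · obtain ⟨p₀, -, hp₀⟩ := isCompact_univ.exists_isMaxOn univ_nonempty hfdc.continuousOn
      exact ⟨fd p₀, dist_nonneg, fun p => hp₀ (Set.mem_univ p)⟩
  set M : ℝ := M0 + 1 with hM
  have hMpos : 0 < M := by linarith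
  set δ : ℝ := ε / 2 with hδ
  have hδpos : 0 < δ := by positivity
  have hψc : Continuous fun p : X × X => Real.toNNReal ((fd p - δ) / M) :=
    continuous_real_toNNReal.comp ((hfdc.sub continuous_const).div_const M)
  set ψ : X × X →ᵇ ℝ≥0 := BoundedContinuousFunction.mkOfCompact ⟨_, hψc⟩ with hψ
  have hψapp : ∀ p, ψ p = Real.toNNReal ((fd p - δ) / M) := fun p => rfl
  have hψ1 : ∀ p, ψ p ≤ 1 := by
    intro p
    rw [hψapp, ← Real.toNNReal_one]
    apply Real.toNNReal_mono
    rw [div_le_one hMpos]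
    have := hM0 p
    linarith
  set U₀ : Set (X × X) := {p | fd p < δ} with hU₀def
  have hU₀ : IsOpen U₀ := isOpen_lt hfdc continuous_const
  have hψ0 : ∀ p ∈ U₀, ψ p = 0 := by
    intro p hp
    rw [hψapp]
    apply Real.toNNReal_of_nonpos
    have hple : fd p < δ := hp
    apply div_nonpos_of_nonpos_of_nonneg (by linarith) hMpos.le
  have hdsub : Set.diagonal X ⊆ U₀ := by
    rintro ⟨p1, p2⟩ hp
    have hp' : p1 = p2 := hp
    show fd (p1, p2) < δ
    simp only [hfd, hp']
    simpa using hδpos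
  -- lower bound on Λ ψ
  have hΛψ : (δ / M : ℝ) ≤ (Λ₀ ψ : ℝ) := by
    refine ge_of_tendsto (NNReal.tendsto_coe.mpr (hΛ₀ ψ)) ?_
    have h1mem : {n : ℕ | 1 ≤ n} ∈ (U : Filter ℕ) := hUatTop (Filter.eventually_ge_atTop 1)
    filter_upwards [hP, h1mem] with n hεn hn1
    have hnpos : (0 : ℝ) < (n : ℝ) := by exact_mod_cast hn1
    have hdivsum : (A ψ n : ℝ) = (∑ k ∈ Finset.range n, ((ψ (e k) : ℝ))) / (n : ℝ) := by
      simp only [hA]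
      push_cast
      ring
    have hterm : ∀ k ∈ Finset.range n, (fd (e k) - δ) / M ≤ ((ψ (e k) : ℝ)) := by
      intro k _
      rw [hψapp]
      exact Real.le_coe_toNNReal _
    have hsum1 : ((∑ k ∈ Finset.range n, fd (e k)) - (n : ℝ) * δ) / M
        ≤ ∑ k ∈ Finset.range n, ((ψ (e k) : ℝ)) := by
      calc ((∑ k ∈ Finset.range n, fd (e k)) - (n : ℝ) * δ) / M
          = ∑ k ∈ Finset.range n, ((fd (e k) - δ) / M) := by
            rw [← Finset.sum_div, Finset.sum_sub_distrib, Finset.sum_const,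
              Finset.card_range, nsmul_eq_mul]
      _ ≤ _ := Finset.sum_le_sum hterm
    have hansum : a n = (∑ k ∈ Finset.range n, fd (e k)) / n := by
      rw [ha]
      rfl
    have hεan : ε ≤ (∑ k ∈ Finset.range n, fd (e k)) / n := by
      rw [← hansum]
      exact hεn
    have hs : 2 * δ * (n : ℝ) ≤ ∑ k ∈ Finset.range n, fd (e k) := by
      have h2δ : 2 * δ = ε := by rw [hδ]; ring
      rw [h2δ]
      rw [le_div_iff₀ hnpos] at hεan
      exact hεan
    have h3 : δ / M ≤ (((∑ k ∈ Finset.range n, fd (e k)) - (n : ℝ) * δ) / M) / (n : ℝ) := by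
      rw [div_div ((∑ k ∈ Finset.range n, fd (e k)) - (n : ℝ) * δ) M (n : ℝ),
        div_le_div_iff₀ hMpos (by positivity)]
      nlinarith [mul_le_mul_of_nonneg_right hs hMpos.le]
    calc δ / M ≤ (((∑ k ∈ Finset.range n, fd (e k)) - (n : ℝ) * δ) / M) / (n : ℝ) := h3
    _ ≤ (∑ k ∈ Finset.range n, ((ψ (e k) : ℝ))) / (n : ℝ) := by gcongr
    _ = (A ψ n : ℝ) := hdivsum.symm
  have hΛψpos : 0 < Λ₀ ψ := by
    rw [← NNReal.coe_pos]
    calc (0 : ℝ) < δ / M := by positivity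
    _ ≤ (Λ₀ ψ : ℝ) := hΛψ
  -- conclusion
  have hbound := riesz_open_bound ΛL hΛ1 ψ hψ1 U₀ hU₀ hψ0
  have h2 : rieszMeasure' ΛL (Set.diagonal X) ≤ ((1 - ΛL ψ : ℝ≥0) : ℝ≥0∞) :=
    le_trans (measure_mono hdsub) hbound
  have h3 : ((1 - ΛL ψ : ℝ≥0) : ℝ≥0∞) < 1 := by
    rw [← ENNReal.coe_one, ENNReal.coe_lt_coe]
    exact tsub_lt_self one_pos hΛψpos
  rw [hdiag] at h2
  exact absurd (h2.trans_lt h3) (lt_irrefl 1)
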